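/- Let λ ∈ ℂ with 2|λ| ≠ 1 and n' a positive integer. Then Σ_{i'=2}^{n'} (2|λ|)^{i'−1} = (2|λ| − (2|λ|)^{n'})/(1 − 2|λ|), and for the matrix W₀ with blocks (W₀)_{i',j'} = (−Λ)^{i'−j'} for i' ≥ j' and 0 otherwise (Λ = λI_n + |λ|N, N the nilpotent lower Jordan block), the bound ‖W₀‖₂ ≤ 1 + (2|λ| − (2|λ|)^{n'})/(1 − 2|λ|) holds. -/

import Mathlib

open Matrix

/-- The n×n nilpotent lower Jordan block: ones on the subdiagonal. -/
noncomputable def Nmat (n : ℕ) : Matrix (Fin n) (Fin n) ℂ :=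
  Matrix.of fun i j => if (i : ℕ) = (j : ℕ) + 1 then 1 else 0

/-- The spectral norm (largest singular value) of a complex matrix:
the operator norm of the induced map between Euclidean spaces. -/
noncomputable def specNorm {m n : Type*} [Fintype m] [Fintype n] [DecidableEq n]
    (W : Matrix m n ℂ) : ℝ :=
  ‖LinearMap.toContinuousLinearMap (Matrix.toEuclideanLin W)‖

open Finset

lemma ind_sum_le_one {α : Type*} [Fintype α] (p : α → Prop) [DecidablePred p]
    (h : ∀ x y, p x → p y → x = y) : ∑ x, (if p x then (1:ℝ) else 0) ≤ 1 := by
  rw [Finset.sum_boole]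
  have : (Finset.univ.filter p).card ≤ 1 :=
    Finset.card_le_one.mpr (fun x hx y hy => h x y (by simpa using hx) (by simpa using hy))
  exact_mod_cast this

lemma one_rowsum_le {n : ℕ} (a : Fin n) :
    ∑ b, ‖(1 : Matrix (Fin n) (Fin n) ℂ) a b‖ ≤ 1 := by
  have : ∀ b : Fin n, ‖(1 : Matrix (Fin n) (Fin n) ℂ) a b‖ = if a = b then (1:ℝ) else 0 := by
    intro b; rw [Matrix.one_apply]; split <;> simp
  rw [Finset.sum_congr rfl fun b _ => this b]
  exact ind_sum_le_one _ (fun x y hx hy => hx ▸ hy ▸ rfl)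

lemma one_colsum_le {n : ℕ} (b : Fin n) :
    ∑ a, ‖(1 : Matrix (Fin n) (Fin n) ℂ) a b‖ ≤ 1 := by
  have : ∀ a : Fin n, ‖(1 : Matrix (Fin n) (Fin n) ℂ) a b‖ = if a = b then (1:ℝ) else 0 := by
    intro a; rw [Matrix.one_apply]; split <;> simp
  rw [Finset.sum_congr rfl fun a _ => this a]
  exact ind_sum_le_one _ (fun x y hx hy => by rw [hx, hy])

lemma Nmat_rowsum_le {n : ℕ} (a : Fin n) : ∑ b, ‖Nmat n a b‖ ≤ 1 := by
  have : ∀ b : Fin n, ‖Nmat n a b‖ = if (a:ℕ) = (b:ℕ)+1 then (1:ℝ) else 0 := by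
    intro b; simp only [Nmat, Matrix.of_apply]; split <;> simp
  rw [Finset.sum_congr rfl fun b _ => this b]
  exact ind_sum_le_one _ (fun x y hx hy => Fin.ext (by omega))

lemma Nmat_colsum_le {n : ℕ} (b : Fin n) : ∑ a, ‖Nmat n a b‖ ≤ 1 := by
  have : ∀ a : Fin n, ‖Nmat n a b‖ = if (a:ℕ) = (b:ℕ)+1 then (1:ℝ) else 0 := by
    intro a; simp only [Nmat, Matrix.of_apply]; split <;> simp
  rw [Finset.sum_congr rfl fun a _ => this a]
  exact ind_sum_le_one _ (fun x y hx hy => Fin.ext (by omega))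

lemma rowsum_pow_le {n : ℕ} (M : Matrix (Fin n) (Fin n) ℂ) (r : ℝ)
    (hr : 0 ≤ r) (h : ∀ a, ∑ b, ‖M a b‖ ≤ r) :
    ∀ (k : ℕ) (a : Fin n), ∑ b, ‖(M ^ k) a b‖ ≤ r ^ k := by
  intro k
  induction k with
  | zero => intro a; simpa using one_rowsum_le a
  | succ k ih =>
    intro a
    rw [pow_succ']
    calc ∑ b, ‖(M * M ^ k) a b‖ ≤ ∑ b, ∑ c, ‖M a c‖ * ‖(M ^ k) c b‖ := by
          refine Finset.sum_le_sum fun b _ => ?_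
          rw [Matrix.mul_apply]
          refine (norm_sum_le _ _).trans (Finset.sum_le_sum fun c _ => ?_)
          rw [norm_mul]
      _ = ∑ c, ‖M a c‖ * ∑ b, ‖(M ^ k) c b‖ := by
          rw [Finset.sum_comm]; simp [Finset.mul_sum]
      _ ≤ ∑ c, ‖M a c‖ * r ^ k :=
          Finset.sum_le_sum fun c _ => mul_le_mul_of_nonneg_left (ih c) (norm_nonneg _)
      _ = (∑ c, ‖M a c‖) * r ^ k := by rw [Finset.sum_mul]
      _ ≤ r * r ^ k := mul_le_mul_of_nonneg_right (h a) (pow_nonneg hr k)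
      _ = r ^ (k+1) := (pow_succ' r k).symm

section Lam
variable (n : ℕ) (lam : ℂ)

lemma Lam_rowsum (a : Fin n) :
    ∑ b, ‖(-(lam • (1 : Matrix (Fin n) (Fin n) ℂ) + ((‖lam‖ : ℝ) : ℂ) • Nmat n)) a b‖
      ≤ 2 * ‖lam‖ := by
  have hc : (0:ℝ) ≤ ‖lam‖ := norm_nonneg lam
  have entry : ∀ b, ‖(-(lam • (1 : Matrix (Fin n) (Fin n) ℂ) + ((‖lam‖ : ℝ) : ℂ) • Nmat n)) a b‖
      ≤ ‖lam‖ * ‖(1 : Matrix (Fin n) (Fin n) ℂ) a b‖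
        + ‖lam‖ * ‖Nmat n a b‖ := by
    intro b
    rw [Matrix.neg_apply, norm_neg, Matrix.add_apply, Matrix.smul_apply, Matrix.smul_apply,
      smul_eq_mul, smul_eq_mul]
    refine (norm_add_le _ _).trans ?_
    rw [norm_mul, norm_mul, Complex.norm_real,
      Real.norm_eq_abs, abs_of_nonneg hc]
  calc ∑ b, ‖(-(lam • (1 : Matrix (Fin n) (Fin n) ℂ) + ((‖lam‖ : ℝ) : ℂ) • Nmat n)) a b‖
      ≤ ∑ b, (‖lam‖ * ‖(1 : Matrix (Fin n) (Fin n) ℂ) a b‖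
          + ‖lam‖ * ‖Nmat n a b‖) := Finset.sum_le_sum fun b _ => entry b
    _ = ‖lam‖ * (∑ b, ‖(1 : Matrix (Fin n) (Fin n) ℂ) a b‖)
        + ‖lam‖ * (∑ b, ‖Nmat n a b‖) := by
        rw [Finset.sum_add_distrib, Finset.mul_sum, Finset.mul_sum]
    _ ≤ ‖lam‖ * 1 + ‖lam‖ * 1 := by
        gcongr
        · exact one_rowsum_le a
        · exact Nmat_rowsum_le a
    _ = 2 * ‖lam‖ := by ring

lemma Lam_colsum (b : Fin n) :
    ∑ a, ‖(-(lam • (1 : Matrix (Fin n) (Fin n) ℂ) + ((‖lam‖ : ℝ) : ℂ) • Nmat n)) a b‖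
      ≤ 2 * ‖lam‖ := by
  have hc : (0:ℝ) ≤ ‖lam‖ := norm_nonneg lam
  have entry : ∀ a, ‖(-(lam • (1 : Matrix (Fin n) (Fin n) ℂ) + ((‖lam‖ : ℝ) : ℂ) • Nmat n)) a b‖
      ≤ ‖lam‖ * ‖(1 : Matrix (Fin n) (Fin n) ℂ) a b‖
        + ‖lam‖ * ‖Nmat n a b‖ := by
    intro a
    rw [Matrix.neg_apply, norm_neg, Matrix.add_apply, Matrix.smul_apply, Matrix.smul_apply,
      smul_eq_mul, smul_eq_mul]
    refine (norm_add_le _ _).trans ?_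
    rw [norm_mul, norm_mul, Complex.norm_real,
      Real.norm_eq_abs, abs_of_nonneg hc]
  calc ∑ a, ‖(-(lam • (1 : Matrix (Fin n) (Fin n) ℂ) + ((‖lam‖ : ℝ) : ℂ) • Nmat n)) a b‖
      ≤ ∑ a, (‖lam‖ * ‖(1 : Matrix (Fin n) (Fin n) ℂ) a b‖
          + ‖lam‖ * ‖Nmat n a b‖) := Finset.sum_le_sum fun a _ => entry a
    _ = ‖lam‖ * (∑ a, ‖(1 : Matrix (Fin n) (Fin n) ℂ) a b‖)
        + ‖lam‖ * (∑ a, ‖Nmat n a b‖) := by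
        rw [Finset.sum_add_distrib, Finset.mul_sum, Finset.mul_sum]
    _ ≤ ‖lam‖ * 1 + ‖lam‖ * 1 := by
        gcongr
        · exact one_colsum_le b
        · exact Nmat_colsum_le b
    _ = 2 * ‖lam‖ := by ring

end Lam

lemma specNorm_le_schur {ι κ : Type*} [Fintype ι] [Fintype κ] [DecidableEq κ]
    (W : Matrix ι κ ℂ) (S : ℝ) (hS : 0 ≤ S)
    (hRow : ∀ i, ∑ j, ‖W i j‖ ≤ S) (hCol : ∀ j, ∑ i, ‖W i j‖ ≤ S) :
    specNorm W ≤ S := by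
  rw [specNorm]
  refine ContinuousLinearMap.opNorm_le_bound _ hS fun x => ?_
  rw [LinearMap.coe_toContinuousLinearMap']
  have hy : ∀ i, Matrix.toEuclideanLin W x i = ∑ j, W i j * x j := by
    intro i
    simp [Matrix.toEuclideanLin_apply, Matrix.mulVec, dotProduct]
  have h1 : ∀ i, ‖∑ j, W i j * x j‖ ^ 2 ≤ S * ∑ j, ‖W i j‖ * ‖x j‖ ^ 2 := by
    intro i
    have ha : ‖∑ j, W i j * x j‖ ≤ ∑ j, Real.sqrt ‖W i j‖ * (Real.sqrt ‖W i j‖ * ‖x j‖) :=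
      (norm_sum_le _ _).trans (le_of_eq (Finset.sum_congr rfl fun j _ => by
        rw [norm_mul, ← mul_assoc, Real.mul_self_sqrt (norm_nonneg _)]))
    calc ‖∑ j, W i j * x j‖ ^ 2
        ≤ (∑ j, Real.sqrt ‖W i j‖ * (Real.sqrt ‖W i j‖ * ‖x j‖)) ^ 2 :=
          pow_le_pow_left₀ (norm_nonneg _) ha 2
      _ ≤ (∑ j, Real.sqrt ‖W i j‖ ^ 2) * ∑ j, (Real.sqrt ‖W i j‖ * ‖x j‖) ^ 2 :=
          Finset.sum_mul_sq_le_sq_mul_sq _ _ _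
      _ = (∑ j, ‖W i j‖) * ∑ j, ‖W i j‖ * ‖x j‖ ^ 2 := by
          congr 1
          · exact Finset.sum_congr rfl fun j _ => Real.sq_sqrt (norm_nonneg _)
          · exact Finset.sum_congr rfl fun j _ => by
              rw [mul_pow, Real.sq_sqrt (norm_nonneg _)]
      _ ≤ S * ∑ j, ‖W i j‖ * ‖x j‖ ^ 2 :=
          mul_le_mul_of_nonneg_right (hRow i)
            (Finset.sum_nonneg fun j _ => mul_nonneg (norm_nonneg _) (sq_nonneg _))
  have h2 : ∑ i, ‖∑ j, W i j * x j‖ ^ 2 ≤ S ^ 2 * ∑ j, ‖x j‖ ^ 2 := by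
    calc ∑ i, ‖∑ j, W i j * x j‖ ^ 2 ≤ ∑ i, S * ∑ j, ‖W i j‖ * ‖x j‖ ^ 2 :=
          Finset.sum_le_sum fun i _ => h1 i
      _ = S * ∑ j, (∑ i, ‖W i j‖) * ‖x j‖ ^ 2 := by
          rw [← Finset.mul_sum, Finset.sum_comm]
          congr 1
          exact Finset.sum_congr rfl fun j _ => (Finset.sum_mul _ _ _).symm
      _ ≤ S * ∑ j, S * ‖x j‖ ^ 2 := by
          refine mul_le_mul_of_nonneg_left (Finset.sum_le_sum fun j _ => ?_) hS
          exact mul_le_mul_of_nonneg_right (hCol j) (sq_nonneg _)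
      _ = S ^ 2 * ∑ j, ‖x j‖ ^ 2 := by rw [← Finset.mul_sum]; ring
  rw [EuclideanSpace.norm_eq, EuclideanSpace.norm_eq]
  have hrw : S * Real.sqrt (∑ j, ‖x j‖ ^ 2) = Real.sqrt (S ^ 2 * ∑ j, ‖x j‖ ^ 2) := by
    rw [Real.sqrt_mul (sq_nonneg S), Real.sqrt_sq hS]
  rw [hrw]
  refine Real.sqrt_le_sqrt ?_
  calc ∑ i, ‖Matrix.toEuclideanLin W x i‖ ^ 2 = ∑ i, ‖∑ j, W i j * x j‖ ^ 2 :=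
        Finset.sum_congr rfl fun i _ => by rw [hy]
    _ ≤ _ := h2

lemma rowsum_geom (r : ℝ) (hr : 0 ≤ r) (n' i : ℕ) (hi : i < n') :
    ∑ j ∈ Finset.range n', (if j ≤ i then r ^ (i - j) else 0) ≤ ∑ k ∈ Finset.range n', r ^ k := by
  have h1 : ∑ j ∈ Finset.range (i+1), (if j ≤ i then r ^ (i - j) else (0:ℝ))
      = ∑ j ∈ Finset.range n', (if j ≤ i then r ^ (i - j) else 0) := by
    refine Finset.sum_subset (Finset.range_subset_range.mpr hi) fun x hx hx' => ?_
    rw [if_neg]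
    simp only [Finset.mem_range] at hx'
    omega
  rw [← h1]
  have h2 : ∑ j ∈ Finset.range (i+1), (if j ≤ i then r ^ (i - j) else (0:ℝ))
      = ∑ k ∈ Finset.range (i+1), r ^ k := by
    rw [show (∑ j ∈ Finset.range (i+1), (if j ≤ i then r ^ (i - j) else (0:ℝ)))
        = ∑ j ∈ Finset.range (i+1), r ^ (i - j) from
      Finset.sum_congr rfl fun j hj => if_pos (by simpa [Nat.lt_succ_iff] using hj)]
    have := Finset.sum_range_reflect (fun k => r ^ k) (i+1)
    simpa using this
  rw [h2]
  exact Finset.sum_le_sum_of_subset_of_nonneg (Finset.range_subset_range.mpr hi)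
    (fun k _ _ => pow_nonneg hr k)

lemma colsum_geom (r : ℝ) (hr : 0 ≤ r) (n' j : ℕ) :
    ∑ i ∈ Finset.range n', (if j ≤ i then r ^ (i - j) else 0) ≤ ∑ k ∈ Finset.range n', r ^ k := by
  by_cases hj : j < n'
  · have h1 : ∑ i ∈ Finset.Ico j n', (if j ≤ i then r ^ (i - j) else (0:ℝ))
        = ∑ i ∈ Finset.range n', (if j ≤ i then r ^ (i - j) else 0) := by
      refine Finset.sum_subset (fun x hx => Finset.mem_range.mpr (Finset.mem_Ico.mp hx).2)
        fun x hx hx' => ?_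
      rw [if_neg]
      simp only [Finset.mem_Ico, Finset.mem_range] at hx hx'
      omega
    rw [← h1, Finset.sum_congr rfl (fun i hi => if_pos (Finset.mem_Ico.mp hi).1),
      Finset.sum_Ico_eq_sum_range]
    calc ∑ i ∈ Finset.range (n' - j), r ^ (j + i - j)
        = ∑ i ∈ Finset.range (n' - j), r ^ i :=
          Finset.sum_congr rfl fun i _ => by congr 1; omega
      _ ≤ ∑ k ∈ Finset.range n', r ^ k :=
          Finset.sum_le_sum_of_subset_of_nonneg
            (Finset.range_subset_range.mpr (by omega)) (fun k _ _ => pow_nonneg hr k)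
  · calc ∑ i ∈ Finset.range n', (if j ≤ i then r ^ (i - j) else (0:ℝ))
        = 0 := Finset.sum_eq_zero fun i hi => by
          rw [if_neg]; simp only [Finset.mem_range] at hi; omega
      _ ≤ _ := Finset.sum_nonneg fun k _ => pow_nonneg hr k

-- transpose power column bound + W0 bounds + main theorem (test chunk)
lemma colsum_pow_le {n : ℕ} (M : Matrix (Fin n) (Fin n) ℂ) (r : ℝ)
    (hr : 0 ≤ r) (h : ∀ b, ∑ a, ‖M a b‖ ≤ r) :
    ∀ (k : ℕ) (b : Fin n), ∑ a, ‖(M ^ k) a b‖ ≤ r ^ k := by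
  intro k b
  have hrow : ∀ a, ∑ b', ‖Mᵀ a b'‖ ≤ r := fun a => by
    simpa [Matrix.transpose_apply] using h a
  have := rowsum_pow_le Mᵀ r hr hrow k b
  calc ∑ a, ‖(M ^ k) a b‖ = ∑ a, ‖(Mᵀ ^ k) b a‖ := by
        refine Finset.sum_congr rfl fun a _ => ?_
        rw [← Matrix.transpose_pow, Matrix.transpose_apply]
    _ ≤ r ^ k := this

theorem stmt16 (n n' : ℕ) (hn' : 0 < n') (lam : ℂ)
    (hlam : 2 * ‖lam‖ ≠ 1)
    (W0 : Matrix (Fin n' × Fin n) (Fin n' × Fin n) ℂ)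
    (hW0 : ∀ (i' j' : Fin n') (a b : Fin n),
      W0 (i', a) (j', b) =
        if (j' : ℕ) ≤ (i' : ℕ) then
          ((-(lam • (1 : Matrix (Fin n) (Fin n) ℂ) + ((‖lam‖ : ℝ) : ℂ) • Nmat n))
              ^ ((i' : ℕ) - (j' : ℕ))) a b
        else 0) :
    ∑ i' ∈ Finset.Icc 2 n', (2 * ‖lam‖) ^ (i' - 1) =
        (2 * ‖lam‖ - (2 * ‖lam‖) ^ n') / (1 - 2 * ‖lam‖) ∧
      specNorm W0 ≤
        1 + (2 * ‖lam‖ - (2 * ‖lam‖) ^ n') / (1 - 2 * ‖lam‖) := by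
  set r : ℝ := 2 * ‖lam‖ with hrdef
  have hr0 : 0 ≤ r := by positivity
  have hr1 : r ≠ 1 := hlam
  have h1r : (1:ℝ) - r ≠ 0 := sub_ne_zero.mpr (Ne.symm hr1)
  have hr1' : r - 1 ≠ 0 := sub_ne_zero.mpr hr1
  -- geometric sum identity
  obtain ⟨m, rfl⟩ : ∃ m, n' = m + 1 := ⟨n' - 1, by omega⟩
  have e2 : ∑ k ∈ Finset.range (m+1), r ^ k = 1 + ∑ i ∈ Finset.range m, r ^ (i+1) := by
    rw [Finset.sum_range_succ']
    simp [add_comm]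
  have e3 : ∑ k ∈ Finset.range (m+1), r ^ k = (r ^ (m+1) - 1) / (r - 1) := geom_sum_eq hr1 (m+1)
  have part1 : ∑ i' ∈ Finset.Icc 2 (m+1), r ^ (i'-1) = (r - r ^ (m+1)) / (1 - r) := by
    have e1 : ∑ i' ∈ Finset.Icc 2 (m+1), r ^ (i'-1) = ∑ i ∈ Finset.range m, r ^ (i+1) := by
      rw [show Finset.Icc 2 (m+1) = Finset.Ico 2 (m+2) from (Finset.Ico_add_one_right_eq_Icc 2 (m+1)).symm,
        Finset.sum_Ico_eq_sum_range]
      refine Finset.sum_congr (by congr 1) fun i _ => ?_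
      congr 1
      omega
    rw [e1]
    have e4 : ∑ i ∈ Finset.range m, r ^ (i+1) = (r ^ (m+1) - 1) / (r - 1) - 1 := by
      rw [← e3, e2]; ring
    rw [e4]
    field_simp
    ring
  have hSeq : 1 + (r - r ^ (m+1)) / (1 - r) = ∑ k ∈ Finset.range (m+1), r ^ k := by
    rw [e3]
    field_simp
    ring
  refine ⟨part1, ?_⟩
  rw [hSeq]
  set S := ∑ k ∈ Finset.range (m+1), r ^ k with hSdef
  have hS0 : 0 ≤ S := Finset.sum_nonneg fun k _ => pow_nonneg hr0 k
  set M := -(lam • (1 : Matrix (Fin n) (Fin n) ℂ) + ((‖lam‖ : ℝ) : ℂ) • Nmat n) with hM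
  have hprow : ∀ (k : ℕ) (a : Fin n), ∑ b, ‖(M ^ k) a b‖ ≤ r ^ k :=
    rowsum_pow_le M r hr0 (fun a => Lam_rowsum n lam a)
  have hpcol : ∀ (k : ℕ) (b : Fin n), ∑ a, ‖(M ^ k) a b‖ ≤ r ^ k :=
    colsum_pow_le M r hr0 (fun b => Lam_colsum n lam b)
  refine specNorm_le_schur W0 S hS0 ?_ ?_
  · rintro ⟨i', a⟩
    rw [Fintype.sum_prod_type]
    calc ∑ j' : Fin (m+1), ∑ b, ‖W0 (i', a) (j', b)‖
        ≤ ∑ j' : Fin (m+1), (if (j':ℕ) ≤ (i':ℕ) then r ^ ((i':ℕ) - (j':ℕ)) else 0) := by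
          refine Finset.sum_le_sum fun j' _ => ?_
          by_cases h : (j':ℕ) ≤ (i':ℕ)
          · rw [if_pos h]
            calc ∑ b, ‖W0 (i', a) (j', b)‖
                = ∑ b, ‖(M ^ ((i':ℕ) - (j':ℕ))) a b‖ :=
                  Finset.sum_congr rfl fun b _ => by rw [hW0, if_pos h]
              _ ≤ r ^ ((i':ℕ) - (j':ℕ)) := hprow _ a
          · rw [if_neg h]
            refine le_of_eq (Finset.sum_eq_zero fun b _ => ?_)
            rw [hW0, if_neg h, norm_zero]
      _ = ∑ j ∈ Finset.range (m+1), (if j ≤ (i':ℕ) then r ^ ((i':ℕ) - j) else 0) :=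
          Fin.sum_univ_eq_sum_range (fun j => if j ≤ (i':ℕ) then r ^ ((i':ℕ) - j) else 0) (m+1)
      _ ≤ S := rowsum_geom r hr0 (m+1) i' i'.isLt
  · rintro ⟨j', b⟩
    rw [Fintype.sum_prod_type]
    calc ∑ i' : Fin (m+1), ∑ a, ‖W0 (i', a) (j', b)‖
        ≤ ∑ i' : Fin (m+1), (if (j':ℕ) ≤ (i':ℕ) then r ^ ((i':ℕ) - (j':ℕ)) else 0) := by
          refine Finset.sum_le_sum fun i' _ => ?_
          by_cases h : (j':ℕ) ≤ (i':ℕ)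
          · rw [if_pos h]
            calc ∑ a, ‖W0 (i', a) (j', b)‖
                = ∑ a, ‖(M ^ ((i':ℕ) - (j':ℕ))) a b‖ :=
                  Finset.sum_congr rfl fun a _ => by rw [hW0, if_pos h]
              _ ≤ r ^ ((i':ℕ) - (j':ℕ)) := hpcol _ b
          · rw [if_neg h]
            refine le_of_eq (Finset.sum_eq_zero fun a _ => ?_)
            rw [hW0, if_neg h, norm_zero]
      _ = ∑ i ∈ Finset.range (m+1), (if (j':ℕ) ≤ i then r ^ (i - (j':ℕ)) else 0) :=
          Fin.sum_univ_eq_sum_range (fun i => if (j':ℕ) ≤ i then r ^ (i - (j':ℕ)) else 0) (m+1)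
      _ ≤ S := colsum_geom r hr0 (m+1) j'
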